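/- Let δ = (1+√5)/2 (so δ² = δ + 1 and 3 − δ = (5−√5)/2 > 0). Index the set I = {(m, μ) : m ∈ {−2,−1,0,1,2}, μ ∈ {0,1}} (10 elements) and define the complex matrix S on I×I by S_{(m,μ),(m′,μ′)} = (√(3−δ)/5) · (−1)^{μμ′ + mμ′ + m′μ} · exp(iπ m m′/5) · δ^{P(μ+m+μ′+m′)}, where P(a) = 0 if a is even and P(a) = 1 if a is odd. Then S is symmetric and unitary (S · S† = I). (S is the modular S-matrix of the ten sectors of the ℤ_3-parafermion Hall state at ν = 3/5.) -/

import Mathlib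

open Matrix Complex

/-- The golden ratio `δ = (1+√5)/2 = 2cos(π/5)`. -/
noncomputable def goldenδ : ℝ := (1 + Real.sqrt 5) / 2

/-- The electric-charge label `m ∈ {−2,−1,0,1,2}` of a sector index. -/
def mVal (p : Fin 5 × Fin 2) : ℤ := (p.1 : ℕ) - 2

/-- The neutral label `μ ∈ {0,1}` of a sector index. -/
def μVal (p : Fin 5 × Fin 2) : ℤ := (p.2 : ℕ)

/-- The parity `P(a)`: `0` if `a` is even, `1` if `a` is odd. -/
def parP (a : ℤ) : ℕ := if Even a then 0 else 1

/-- The modular S-matrix of the ten sectors `(m, μ)`, `m ∈ {0,±1,±2}`,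
`μ ∈ {0,1}`, of the ℤ_3-parafermion Hall state at `ν = 3/5`:
`S_{(m,μ),(m′,μ′)} = (√(3−δ)/5) · (−1)^{μμ′+mμ′+m′μ} · e^{iπmm′/5} ·
δ^{P(μ+m+μ′+m′)}`. -/
noncomputable def Smat : Matrix (Fin 5 × Fin 2) (Fin 5 × Fin 2) ℂ :=
  Matrix.of fun p q =>
    ((Real.sqrt (3 - goldenδ) / 5 : ℝ) : ℂ) *
      (-1 : ℂ) ^ (μVal p * μVal q + mVal p * μVal q + mVal q * μVal p) *
      Complex.exp (Complex.I * (Real.pi : ℂ) * (mVal p : ℂ) * (mVal q : ℂ) / 5) *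
      ((goldenδ : ℝ) : ℂ) ^ parP (μVal p + mVal p + μVal q + mVal q)

/-- **The modular S-matrix of the ℤ_3-parafermion Hall state is symmetric and
unitary:** `Sᵀ = S` and `S·S† = 1`. -/
theorem Smat_symm : Smatᵀ = Smat := by
  ext p q
  simp only [transpose_apply, Smat, of_apply]
  rw [show μVal q * μVal p + mVal q * μVal p + mVal p * μVal q
      = μVal p * μVal q + mVal p * μVal q + mVal q * μVal p by ring,
    show μVal q + mVal q + μVal p + mVal p = μVal p + mVal p + μVal q + mVal q by ring,
    show Complex.I * (Real.pi : ℂ) * (mVal q : ℂ) * (mVal p : ℂ) / 5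
      = Complex.I * (Real.pi : ℂ) * (mVal p : ℂ) * (mVal q : ℂ) / 5 by ring]

noncomputable def zz : ℂ := Complex.exp (Real.pi * Complex.I / 5)
noncomputable def Cc : ℂ := ((Real.sqrt (3 - goldenδ) / 5 : ℝ) : ℂ)
noncomputable def Dd : ℂ := ((goldenδ : ℝ) : ℂ)

lemma zz_ne_zero : zz ≠ 0 := Complex.exp_ne_zero _

lemma zz_zpow (n : ℤ) : Complex.exp (Real.pi * Complex.I * n / 5) = zz ^ n := by
  rw [zz, ← Complex.exp_int_mul]; ring_nf

lemma exp_mm (a b : ℤ) :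
    Complex.exp (Complex.I * (Real.pi:ℂ) * (a:ℂ) * (b:ℂ) / 5) = zz ^ (a*b) := by
  rw [← zz_zpow]; push_cast; ring_nf

lemma zz_pow_eq_one_iff (t : ℤ) : zz ^ t = 1 ↔ (10 : ℤ) ∣ t := by
  rw [← zz_zpow, Complex.exp_eq_one_iff]
  constructor
  · rintro ⟨n, h⟩
    refine ⟨n, ?_⟩
    have hπ : (Real.pi : ℂ) ≠ 0 := by exact_mod_cast Real.pi_ne_zero
    have hI : Complex.I ≠ 0 := Complex.I_ne_zero
    have h2 : (Real.pi : ℂ) * Complex.I * t = Real.pi * Complex.I * (10 * n) := by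
      have h5 : (↑Real.pi * Complex.I * t / 5) * 5 = (↑n * (2 * ↑Real.pi * Complex.I)) * 5 := by
        rw [h]
      field_simp at h5
      linear_combination (↑Real.pi * Complex.I) * h5
    have : (t : ℂ) = 10 * n := by
      have := mul_left_cancel₀ (mul_ne_zero hπ hI) h2
      exact_mod_cast this
    exact_mod_cast this
  · rintro ⟨n, rfl⟩
    exact ⟨n, by push_cast; ring⟩

lemma zz_pow_five : zz ^ (5:ℤ) = -1 := by
  rw [← zz_zpow]
  rw [show (Real.pi : ℂ) * Complex.I * ((5:ℤ):ℂ) / 5 = Real.pi * Complex.I by push_cast; ring,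
    Complex.exp_pi_mul_I]

lemma conj_zz : (starRingEnd ℂ) zz = zz⁻¹ := by
  rw [zz, ← Complex.exp_conj, ← Complex.exp_neg]
  congr 1
  have : (starRingEnd ℂ) (5:ℂ) = 5 := map_ofNat _ 5
  simp [map_div₀, Complex.conj_ofReal, this]
  ring

lemma conj_zz_zpow (n : ℤ) : (starRingEnd ℂ) (zz ^ n) = zz ^ (-n) := by
  rw [map_zpow₀, conj_zz]
  exact (inv_zpow zz n).trans (zpow_neg zz n).symm

lemma conj_neg_one_zpow (n : ℤ) : (starRingEnd ℂ) ((-1:ℂ) ^ n) = (-1:ℂ) ^ n := by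
  rw [map_zpow₀]; norm_num

lemma neg_one_zpow_add (a b : ℤ) : (-1:ℂ)^(a+b) = (-1:ℂ)^a * (-1:ℂ)^b :=
  zpow_add₀ (by norm_num) a b

lemma zz_zpow_add (a b : ℤ) : zz^(a+b) = zz^a * zz^b := zpow_add₀ zz_ne_zero a b

lemma golden_sq : goldenδ ^ 2 = goldenδ + 1 := by
  have h5 : Real.sqrt 5 ^ 2 = 5 := Real.sq_sqrt (by norm_num)
  rw [goldenδ]; nlinarith [h5]

lemma golden_lt_three : goldenδ < 3 := by
  have : Real.sqrt 5 < 3 := by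
    nlinarith [Real.sq_sqrt (show (0:ℝ) ≤ 5 by norm_num), Real.sqrt_nonneg 5]
  rw [goldenδ]; linarith

lemma key_real : (Real.sqrt (3 - goldenδ) / 5) ^ 2 * ((1 + goldenδ ^ 2) * 5) = 1 := by
  have h : (0:ℝ) ≤ 3 - goldenδ := by linarith [golden_lt_three]
  have hc : (Real.sqrt (3 - goldenδ) / 5) ^ 2 = (3 - goldenδ) / 25 := by
    rw [div_pow, Real.sq_sqrt h]; norm_num
  rw [hc]
  nlinarith [golden_sq]

lemma key_complex : Cc ^ 2 * ((1 + Dd ^ 2) * 5) = 1 := by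
  rw [Cc, Dd,
    show (((Real.sqrt (3 - goldenδ) / 5 : ℝ)):ℂ)^2 * ((1 + ((goldenδ:ℝ):ℂ)^2)*5)
      = (((Real.sqrt (3 - goldenδ) / 5)^2 * ((1 + goldenδ^2)*5) : ℝ) : ℂ) by push_cast; ring,
    key_real, Complex.ofReal_one]

lemma parP_apply_even {a : ℤ} (h : Even a) : parP a = 0 := if_pos h
lemma parP_apply_odd {a : ℤ} (h : ¬ Even a) : parP a = 1 := if_neg h

lemma Dd_pair_sum (x : ℤ) :
    Dd ^ (parP x + parP x) + Dd ^ (parP (x+1) + parP (x+1)) = 1 + Dd ^ 2 := by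
  by_cases h : Even x
  · have h1 : ¬ Even (x+1) := by simp [Int.even_add_one, h]
    rw [parP_apply_even h, parP_apply_odd h1]
    ring
  · have h1 : Even (x+1) := by simpa [Int.even_add_one] using h
    rw [parP_apply_odd h, parP_apply_even h1]
    ring

lemma parP_congr {a b : ℤ} (h : Even (a - b)) : parP a = parP b := by
  rw [Int.even_sub] at h
  simp [parP, h]

-- the key term lemma
lemma Smat_term (p q r : Fin 5 × Fin 2) :
    Smat p r * (starRingEnd ℂ) (Smat q r) =
      Cc^2 * (-1:ℂ) ^ (μVal r * (μVal p + mVal p + μVal q + mVal q) + mVal r * (μVal p + μVal q))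
        * zz ^ (mVal r * (mVal p - mVal q))
        * Dd ^ (parP (μVal p + mVal p + μVal r + mVal r) + parP (μVal q + mVal q + μVal r + mVal r)) := by
  simp only [Smat, of_apply, exp_mm, _root_.map_mul, conj_zz_zpow, conj_neg_one_zpow,
    _root_.map_pow, Complex.conj_ofReal]
  conv_rhs =>
    rw [show μVal r * (μVal p + mVal p + μVal q + mVal q) + mVal r * (μVal p + μVal q)
        = (μVal p * μVal r + mVal p * μVal r + mVal r * μVal p)
          + (μVal q * μVal r + mVal q * μVal r + mVal r * μVal q) by ring,
      neg_one_zpow_add,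
      show mVal r * (mVal p - mVal q) = mVal p * mVal r + -(mVal q * mVal r) by ring,
      zz_zpow_add, pow_add]
  rw [Cc, Dd]
  ring

lemma mVal_range (p : Fin 5 × Fin 2) : -2 ≤ mVal p ∧ mVal p ≤ 2 := by
  have := p.1.isLt
  unfold mVal
  omega

lemma μVal_range (p : Fin 5 × Fin 2) : 0 ≤ μVal p ∧ μVal p ≤ 1 := by
  have := p.2.isLt
  unfold μVal
  omega

lemma eq_of_vals {p q : Fin 5 × Fin 2} (hm : mVal p = mVal q) (hμ : μVal p = μVal q) :
    p = q := by
  unfold mVal at hm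
  unfold μVal at hμ
  have h1 : p.1 = q.1 := by
    have := p.1.isLt; have := q.1.isLt
    exact Fin.ext (by omega)
  have h2 : p.2 = q.2 := by
    have := p.2.isLt; have := q.2.isLt
    exact Fin.ext (by omega)
  exact Prod.ext h1 h2


lemma neg_one_zpow_even {n : ℤ} (h : Even n) : (-1:ℂ)^n = 1 := Even.neg_one_zpow h
lemma neg_one_zpow_odd {n : ℤ} (h : ¬ Even n) : (-1:ℂ)^n = -1 :=
  Odd.neg_one_zpow (Int.not_even_iff_odd.mp h)

lemma neg_one_zpow_congr {m n : ℤ} (h : Even (m - n)) : (-1:ℂ)^m = (-1:ℂ)^n := by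
  rw [Int.even_sub] at h
  by_cases hm : Even m
  · rw [neg_one_zpow_even hm, neg_one_zpow_even (h.mp hm)]
  · rw [neg_one_zpow_odd hm, neg_one_zpow_odd (fun hn => hm (h.mpr hn))]

lemma neg_one_zpow_flip {m n : ℤ} (h : ¬ Even (m - n)) : (-1:ℂ)^m = -(-1:ℂ)^n := by
  rw [Int.even_sub] at h
  by_cases hm : Even m
  · rw [neg_one_zpow_even hm, neg_one_zpow_odd (fun hn => h (iff_of_true hm hn))]
    ring
  · rw [neg_one_zpow_odd hm,
      neg_one_zpow_even ((Int.even_or_odd n).resolve_right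
        (fun hn => h (iff_of_false hm (Int.not_even_iff_odd.mpr hn))))]

lemma parP_add_eq_one {x y : ℤ} (h : ¬ Even (x + y)) : parP x + parP y = 1 := by
  by_cases hx : Even x
  · have hy : ¬ Even y := by rw [Int.even_add] at h; tauto
    rw [parP_apply_even hx, parP_apply_odd hy]
  · have hy : Even y := by
      rcases Int.even_or_odd y with h'|h'
      · exact h'
      · exact absurd (by rw [Int.even_add]; rw [← Int.not_even_iff_odd] at h'; tauto) h
    rw [parP_apply_odd hx, parP_apply_even hy]

lemma neg_one_eq_zz_pow (n : ℤ) : (-1:ℂ)^n = zz^(5*n) := by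
  rw [_root_.zpow_mul, zz_pow_five]

lemma ksum_odd (p q : Fin 5 × Fin 2) (k : Fin 5)
    (hab : ¬ Even (μVal p + mVal p + μVal q + mVal q)) :
    Cc^2 * (-1:ℂ) ^ (μVal (k,(0:Fin 2)) * (μVal p + mVal p + μVal q + mVal q) + mVal (k,(0:Fin 2)) * (μVal p + μVal q))
      * zz ^ (mVal (k,(0:Fin 2)) * (mVal p - mVal q))
      * Dd ^ (parP (μVal p + mVal p + μVal (k,(0:Fin 2)) + mVal (k,(0:Fin 2))) + parP (μVal q + mVal q + μVal (k,(0:Fin 2)) + mVal (k,(0:Fin 2))))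
    + Cc^2 * (-1:ℂ) ^ (μVal (k,(1:Fin 2)) * (μVal p + mVal p + μVal q + mVal q) + mVal (k,(1:Fin 2)) * (μVal p + μVal q))
      * zz ^ (mVal (k,(1:Fin 2)) * (mVal p - mVal q))
      * Dd ^ (parP (μVal p + mVal p + μVal (k,(1:Fin 2)) + mVal (k,(1:Fin 2))) + parP (μVal q + mVal q + μVal (k,(1:Fin 2)) + mVal (k,(1:Fin 2))))
    = 0 := by
  have hμ0 : μVal (k,(0:Fin 2)) = 0 := rfl
  have hμ1 : μVal (k,(1:Fin 2)) = 1 := rfl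
  have hm0 : mVal (k,(0:Fin 2)) = ((k:ℕ):ℤ) - 2 := rfl
  have hm1 : mVal (k,(1:Fin 2)) = ((k:ℕ):ℤ) - 2 := rfl
  rw [hμ0, hμ1, hm0, hm1]
  set K : ℤ := ((k:ℕ):ℤ) - 2 with hK
  rw [Int.even_iff] at hab
  rw [parP_add_eq_one (x := μVal p + mVal p + 0 + K) (by rw [Int.even_iff]; omega),
    parP_add_eq_one (x := μVal p + mVal p + 1 + K) (by rw [Int.even_iff]; omega),
    neg_one_zpow_flip (m := 1 * (μVal p + mVal p + μVal q + mVal q) + K * (μVal p + μVal q))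
      (n := 0 * (μVal p + mVal p + μVal q + mVal q) + K * (μVal p + μVal q))
      (by rw [Int.even_iff]; omega)]
  ring

lemma ksum_even (p q : Fin 5 × Fin 2) (k : Fin 5)
    (hab : Even (μVal p + mVal p + μVal q + mVal q)) :
    Cc^2 * (-1:ℂ) ^ (μVal (k,(0:Fin 2)) * (μVal p + mVal p + μVal q + mVal q) + mVal (k,(0:Fin 2)) * (μVal p + μVal q))
      * zz ^ (mVal (k,(0:Fin 2)) * (mVal p - mVal q))
      * Dd ^ (parP (μVal p + mVal p + μVal (k,(0:Fin 2)) + mVal (k,(0:Fin 2))) + parP (μVal q + mVal q + μVal (k,(0:Fin 2)) + mVal (k,(0:Fin 2))))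
    + Cc^2 * (-1:ℂ) ^ (μVal (k,(1:Fin 2)) * (μVal p + mVal p + μVal q + mVal q) + mVal (k,(1:Fin 2)) * (μVal p + μVal q))
      * zz ^ (mVal (k,(1:Fin 2)) * (mVal p - mVal q))
      * Dd ^ (parP (μVal p + mVal p + μVal (k,(1:Fin 2)) + mVal (k,(1:Fin 2))) + parP (μVal q + mVal q + μVal (k,(1:Fin 2)) + mVal (k,(1:Fin 2))))
    = (Cc^2 * (1 + Dd^2)) *
        zz ^ ((((k:ℕ):ℤ) - 2) * ((mVal p - mVal q) + 5 * (μVal p + μVal q))) := by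
  have hμ0 : μVal (k,(0:Fin 2)) = 0 := rfl
  have hμ1 : μVal (k,(1:Fin 2)) = 1 := rfl
  have hm0 : mVal (k,(0:Fin 2)) = ((k:ℕ):ℤ) - 2 := rfl
  have hm1 : mVal (k,(1:Fin 2)) = ((k:ℕ):ℤ) - 2 := rfl
  rw [hμ0, hμ1, hm0, hm1]
  set K : ℤ := ((k:ℕ):ℤ) - 2 with hK
  have habm : (μVal p + mVal p + μVal q + mVal q) % 2 = 0 := Int.even_iff.mp hab
  rw [parP_congr (a := μVal q + mVal q + 0 + K) (b := μVal p + mVal p + 0 + K)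
      (by rw [Int.even_iff]; omega),
    parP_congr (a := μVal q + mVal q + 1 + K) (b := μVal p + mVal p + 1 + K)
      (by rw [Int.even_iff]; omega),
    show μVal p + mVal p + 1 + K = (μVal p + mVal p + 0 + K) + 1 by ring,
    neg_one_zpow_congr (m := 1 * (μVal p + mVal p + μVal q + mVal q) + K * (μVal p + μVal q))
      (n := 0 * (μVal p + mVal p + μVal q + mVal q) + K * (μVal p + μVal q))
      (by rw [Int.even_iff]; omega),
    show (0:ℤ) * (μVal p + mVal p + μVal q + mVal q) + K * (μVal p + μVal q)
      = K * (μVal p + μVal q) by ring,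
    neg_one_eq_zz_pow,
    show K * ((mVal p - mVal q) + 5 * (μVal p + μVal q))
      = 5 * (K * (μVal p + μVal q)) + K * (mVal p - mVal q) by ring,
    zz_zpow_add]
  have := Dd_pair_sum (μVal p + mVal p + 0 + K)
  linear_combination (Cc^2 * zz ^ (5 * (K * (μVal p + μVal q))) * zz ^ (K * (mVal p - mVal q))) * this

lemma zz_geom_sum (t : ℤ) (ht : Even t) :
    ∑ k : Fin 5, zz ^ ((((k:ℕ):ℤ) - 2) * t) = if (10:ℤ) ∣ t then 5 else 0 := by
  have h10 : zz ^ (10:ℤ) = 1 := by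
    rw [show (10:ℤ) = 5 * 2 by norm_num, _root_.zpow_mul, zz_pow_five]
    norm_num
  by_cases h : (10:ℤ) ∣ t
  · rw [if_pos h]
    have h1 : zz ^ t = 1 := (zz_pow_eq_one_iff t).mpr h
    have : ∀ k : Fin 5, zz ^ ((((k:ℕ):ℤ) - 2) * t) = 1 := by
      intro k
      rw [mul_comm, _root_.zpow_mul, h1, _root_.one_zpow]
    simp [this]
  · rw [if_neg h]
    have hne : zz ^ t ≠ 1 := fun h1 => h ((zz_pow_eq_one_iff t).mp h1)
    have h5 : (zz ^ t) ^ (5:ℕ) = 1 := by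
      obtain ⟨u, hu⟩ := ht
      rw [← zpow_natCast, ← _root_.zpow_mul, hu]
      rw [show (u + u) * ((5:ℕ):ℤ) = 10 * u by push_cast; ring, _root_.zpow_mul, h10,
        _root_.one_zpow]
    have hsplit : ∀ k : Fin 5, zz ^ ((((k:ℕ):ℤ) - 2) * t)
        = zz ^ ((-2) * t) * (zz ^ t) ^ (k:ℕ) := by
      intro k
      rw [show (((k:ℕ):ℤ) - 2) * t = (-2) * t + t * (k:ℕ) by ring, zz_zpow_add,
        _root_.zpow_mul zz t ((k:ℕ):ℤ), zpow_natCast]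
    simp only [hsplit]
    rw [← Finset.mul_sum, Fin.sum_univ_eq_sum_range (fun i => (zz ^ t) ^ i) 5,
      geom_sum_eq hne 5, h5]
    simp

theorem Smat_unitary : Smat * Smat.conjTranspose = 1 := by
  ext p q
  rw [Matrix.mul_apply, Matrix.one_apply]
  simp only [conjTranspose_apply, star_def, Smat_term]
  rw [Fintype.sum_prod_type]
  simp only [Fin.sum_univ_two]
  by_cases hab : Even (μVal p + mVal p + μVal q + mVal q)
  · rw [Finset.sum_congr rfl (fun k _ => ksum_even p q k hab), ← Finset.mul_sum,
      zz_geom_sum _ (by rw [Int.even_iff] at hab ⊢; omega)]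
    by_cases hpq : p = q
    · subst hpq
      rw [if_pos rfl, if_pos ⟨μVal p, by unfold mVal μVal; ring⟩]
      calc Cc ^ 2 * (1 + Dd ^ 2) * 5 = Cc ^ 2 * ((1 + Dd ^ 2) * 5) := by ring
        _ = 1 := key_complex
    · rw [if_neg hpq, if_neg, mul_zero]
      intro hdvd
      obtain ⟨hm1, hm2⟩ := mVal_range p
      obtain ⟨hm3, hm4⟩ := mVal_range q
      obtain ⟨hμ1, hμ2⟩ := μVal_range p
      obtain ⟨hμ3, hμ4⟩ := μVal_range q
      exact hpq (eq_of_vals (by omega) (by omega))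
  · rw [Finset.sum_congr rfl (fun k _ => ksum_odd p q k hab), if_neg, Finset.sum_const_zero]
    intro hpq
    subst hpq
    exact hab ⟨μVal p + mVal p, by ring⟩


theorem Smat_symmetric_unitary : Smatᵀ = Smat ∧ Smat * Smat.conjTranspose = 1 :=
  ⟨Smat_symm, Smat_unitary⟩
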